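/- For α > 0, τ ≥ 0, and eigenvalues λ_j(τ) = (τ² + j^{2/d})^{-α} (j ≥ 1), the series ∑_{j≥1} (λ_j(τ)/λ_j(0) − 1)² converges if and only if d < 4, i.e. for all spatial dimensions d ∈ {1,2,3}. -/

import Mathlib

/-- Bernoulli-type upper bound: for `0 ≤ p ≤ 1` and `r ≥ 0`,
`(1+r)^(-p) ≤ 1 - p * (r/(1+r))`. -/
lemma bern_upper {r p : ℝ} (hr : 0 ≤ r) (hp0 : 0 ≤ p) (hp1 : p ≤ 1) :
    (1 + r) ^ (-p) ≤ 1 - p * (r / (1 + r)) := by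
  have h1r : (0:ℝ) < 1 + r := by linarith
  have hs : (-1:ℝ) ≤ -(r / (1 + r)) := by
    have : r / (1 + r) ≤ 1 := by
      rw [div_le_one h1r]; linarith
    linarith
  have key := rpow_one_add_le_one_add_mul_self hs hp0 hp1
  have h1 : 1 + -(r / (1 + r)) = (1 + r)⁻¹ := by field_simp; ring
  rw [h1, Real.inv_rpow h1r.le, ← Real.rpow_neg h1r.le] at key
  linarith [key]

/-- Bernoulli-type lower bound: for `p ≥ 1` and `r ≥ 0`,
`1 - p * r ≤ (1+r)^(-p)`. -/
lemma bern_lower {r p : ℝ} (hr : 0 ≤ r) (hp : 1 ≤ p) :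
    1 - p * r ≤ (1 + r) ^ (-p) := by
  have h1r : (0:ℝ) < 1 + r := by linarith
  have hs : (-1:ℝ) ≤ -(r / (1 + r)) := by
    have : r / (1 + r) ≤ 1 := by
      rw [div_le_one h1r]; linarith
    linarith
  have key := one_add_mul_self_le_rpow_one_add hs hp
  have h1 : 1 + -(r / (1 + r)) = (1 + r)⁻¹ := by field_simp; ring
  rw [h1, Real.inv_rpow h1r.le, ← Real.rpow_neg h1r.le] at key
  have hdiv : r / (1 + r) ≤ r := by
    rw [div_le_iff₀ h1r]
    nlinarith
  have hp0 : 0 ≤ p := by linarith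
  nlinarith [mul_le_mul_of_nonneg_left hdiv hp0]

/-- Two-sided pointwise bound for the summand. -/
lemma term_bound (α τ : ℝ) (hα : 0 < α) (hτ : 0 < τ) {x : ℝ} (hx : 1 ≤ x) :
    (min α 1 * (τ ^ 2 / (1 + τ ^ 2))) ^ 2 * (x ^ 2)⁻¹
      ≤ ((τ ^ 2 + x) ^ (-α) / x ^ (-α) - 1) ^ 2
    ∧ ((τ ^ 2 + x) ^ (-α) / x ^ (-α) - 1) ^ 2
      ≤ (max α 1 * τ ^ 2) ^ 2 * (x ^ 2)⁻¹ := by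
  have hx0 : (0:ℝ) < x := lt_of_lt_of_le one_pos hx
  have hτ2 : (0:ℝ) < τ ^ 2 := by positivity
  set r : ℝ := τ ^ 2 / x with hr_def
  have hr : 0 < r := by positivity
  have hrτ : r ≤ τ ^ 2 := by
    rw [hr_def, div_le_iff₀ hx0]; nlinarith
  have hratio : (τ ^ 2 + x) ^ (-α) / x ^ (-α) = (1 + r) ^ (-α) := by
    rw [← Real.div_rpow (by positivity) hx0.le]
    congr 1
    rw [hr_def]
    field_simp
    ring
  have h1r : (0:ℝ) < 1 + r := by linarith
  set u : ℝ := (1 + r) ^ (-α) with hu_def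
  have hu1 : u ≤ 1 :=
    Real.rpow_le_one_of_one_le_of_nonpos (by linarith) (by linarith)
  -- upper bound
  have hM : 1 ≤ max α 1 := le_max_right _ _
  have hαM : -(max α 1) ≤ -α := by
    simp only [neg_le_neg_iff]; exact le_max_left _ _
  have hub : 1 - u ≤ max α 1 * r := by
    have h1 : (1 + r) ^ (-(max α 1)) ≤ u :=
      Real.rpow_le_rpow_of_exponent_le (by linarith) hαM
    have h2 := bern_lower hr.le hM
    linarith
  -- lower bound
  have hm0 : 0 < min α 1 := lt_min hα one_pos
  have hm1 : min α 1 ≤ 1 := min_le_right _ _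
  have hlb : min α 1 * (r / (1 + r)) ≤ 1 - u := by
    have h1 : u ≤ (1 + r) ^ (-(min α 1)) :=
      Real.rpow_le_rpow_of_exponent_le (by linarith) (by
        simp only [neg_le_neg_iff]; exact min_le_left _ _)
    have h2 := bern_upper hr.le hm0.le hm1
    linarith
  have hsq : ((τ ^ 2 + x) ^ (-α) / x ^ (-α) - 1) ^ 2 = (1 - u) ^ 2 := by
    rw [hratio]; ring
  have h1u : 0 ≤ 1 - u := by linarith
  constructor
  · -- lower
    have h2 : r / (1 + r) = τ ^ 2 / (x + τ ^ 2) := by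
      rw [hr_def]; field_simp
    have hrr : τ ^ 2 / ((1 + τ ^ 2) * x) ≤ r / (1 + r) := by
      rw [h2]
      gcongr
      nlinarith
    have hstep : min α 1 * (τ ^ 2 / ((1 + τ ^ 2) * x)) ≤ 1 - u :=
      le_trans (by nlinarith) hlb
    have hnn : 0 ≤ min α 1 * (τ ^ 2 / ((1 + τ ^ 2) * x)) := by positivity
    have := pow_le_pow_left₀ hnn hstep 2
    rw [hsq]
    calc (min α 1 * (τ ^ 2 / (1 + τ ^ 2))) ^ 2 * (x ^ 2)⁻¹
        = (min α 1 * (τ ^ 2 / ((1 + τ ^ 2) * x))) ^ 2 := by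
          field_simp
      _ ≤ (1 - u) ^ 2 := this
  · -- upper
    have := pow_le_pow_left₀ h1u hub 2
    rw [hsq]
    calc (1 - u) ^ 2 ≤ (max α 1 * r) ^ 2 := this
      _ = (max α 1 * τ ^ 2) ^ 2 * (x ^ 2)⁻¹ := by
          rw [hr_def]; field_simp

/-- For `α > 0`, `τ > 0` and eigenvalues `λ_j(τ) = (τ² + j^{2/d})^{-α}` (`j ≥ 1`),
the series `∑ (λ_j(τ)/λ_j(0) − 1)²` converges if and only if `d < 4`. -/
theorem stmt_0 (d : ℕ) (hd : 1 ≤ d) (α τ : ℝ) (hα : 0 < α) (hτ : 0 < τ) :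
    Summable (fun j : ℕ =>
      ((τ ^ 2 + ((j : ℝ) + 1) ^ ((2 : ℝ) / d)) ^ (-α)
        / (((j : ℝ) + 1) ^ ((2 : ℝ) / d)) ^ (-α) - 1) ^ 2) ↔ d < 4 := by
  have hd0 : (0:ℝ) < d := by exact_mod_cast hd
  set q : ℝ := (2:ℝ) / d with hq_def
  have hq : 0 < q := by positivity
  set x : ℕ → ℝ := fun j => ((j : ℝ) + 1) ^ q with hx_def
  have hx1 : ∀ j, 1 ≤ x j := fun j =>
    Real.one_le_rpow (by exact_mod_cast Nat.succ_le_succ (Nat.zero_le j)) hq.le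
  have hx0 : ∀ j, 0 < x j := fun j => lt_of_lt_of_le one_pos (hx1 j)
  set g : ℕ → ℝ := fun j => ((x j) ^ 2)⁻¹ with hg_def
  have hgrw : ∀ j, g j = ((j : ℝ) + 1) ^ (-((4:ℝ) / d)) := by
    intro j
    have hj0 : (0:ℝ) ≤ (j : ℝ) + 1 := by positivity
    have : (x j) ^ 2 = ((j : ℝ) + 1) ^ ((4:ℝ) / d) := by
      rw [hx_def]
      rw [← Real.rpow_natCast (((j : ℝ) + 1) ^ q) 2, ← Real.rpow_mul hj0]
      congr 1
      rw [hq_def]; push_cast; ring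
    rw [hg_def]
    simp only [this, ← Real.rpow_neg hj0]
  have hgsum : Summable g ↔ d < 4 := by
    have h1 : Summable g ↔ Summable (fun n : ℕ => (n : ℝ) ^ (-((4:ℝ) / d))) := by
      rw [← summable_nat_add_iff (f := fun n : ℕ => (n : ℝ) ^ (-((4:ℝ) / d))) 1]
      refine summable_congr fun j => ?_
      rw [hgrw j]
      norm_cast
    rw [h1, Real.summable_nat_rpow]
    rw [neg_lt_neg_iff, lt_div_iff₀ hd0, one_mul]
    exact_mod_cast Iff.rfl
  have hc1 : (0:ℝ) < (min α 1 * (τ ^ 2 / (1 + τ ^ 2))) ^ 2 := by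
    have := lt_min hα one_pos
    positivity
  constructor
  · intro h
    by_contra hlt
    have hns : ¬ Summable g := fun hs => hlt (hgsum.mp hs)
    apply hns
    have hsum : Summable (fun j => (min α 1 * (τ ^ 2 / (1 + τ ^ 2))) ^ 2 * g j) := by
      apply h.of_nonneg_of_le (fun j => by positivity)
      intro j
      exact (term_bound α τ hα hτ (hx1 j)).1
    exact (summable_mul_left_iff hc1.ne').mp hsum
  · intro h
    have hgs : Summable g := hgsum.mpr h
    apply Summable.of_nonneg_of_le (fun j => sq_nonneg _)
      (fun j => (term_bound α τ hα hτ (hx1 j)).2)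
    exact hgs.mul_left _
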